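/- Let N ≥ 2 be a natural number, χ ∈ (0,1), and 1 < K < K' reals. Suppose C ∈ (0,1) satisfies C − χ·(C/K)^{N−1} = 1 − χ and C' ∈ (0,1) satisfies C' − χ·(C'/K')^{N−1} = 1 − χ. Then C' < C. -/

import Mathlib

theorem pgg_cutoff_strict_anti_in_K
    (N : ℕ) (hN : 2 ≤ N) (χ : ℝ) (hχ : χ ∈ Set.Ioo (0:ℝ) 1)
    (K K' : ℝ) (hK : 1 < K) (hKK' : K < K')
    (C C' : ℝ) (hC : C ∈ Set.Ioo (0:ℝ) 1) (hC' : C' ∈ Set.Ioo (0:ℝ) 1)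
    (heq : C - χ * (C / K) ^ (N - 1) = 1 - χ)
    (heq' : C' - χ * (C' / K') ^ (N - 1) = 1 - χ) :
    C' < C := by
  obtain ⟨hχ0, hχ1⟩ := hχ
  obtain ⟨hC0, hC1⟩ := hC
  obtain ⟨hC'0, hC'1⟩ := hC'
  set n := N - 1 with hn
  have hn1 : 1 ≤ n := by omega
  have hn0 : n ≠ 0 := by omega
  have hK0 : (0:ℝ) < K := by linarith
  have hK'0 : (0:ℝ) < K' := by linarith
  have hK'1 : (1:ℝ) < K' := by linarith
  have hK'n : (1:ℝ) < K' ^ n := one_lt_pow₀ hK'1 hn0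
  have hK'npos : (0:ℝ) < K' ^ n := by linarith
  by_contra hcon
  push_neg at hcon  -- C ≤ C'
  -- strict inequality of powers: (C/K')^n < (C/K)^n
  have hdiv : C / K' < C / K := by
    apply div_lt_div_of_pos_left hC0 hK0 hKK'
  have hdivnn : 0 ≤ C / K' := by positivity
  have hpowlt : (C / K') ^ n < (C / K) ^ n := pow_lt_pow_left₀ hdiv hdivnn hn0
  have hCC' : C < C' := by
    rcases lt_or_eq_of_le hcon with h | h
    · exact h
    · exfalso
      rw [← h] at heq'
      nlinarith
  -- the concave function h(x) = x - (χ/K'^n) * x^n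
  have hconc : ConcaveOn ℝ (Set.Ici (0:ℝ))
      (fun x : ℝ => x - χ / K' ^ n * x ^ n) := by
    have h1 : ConcaveOn ℝ (Set.Ici (0:ℝ)) (fun x : ℝ => x) :=
      (concaveOn_id (convex_Ici 0))
    have h2 : ConvexOn ℝ (Set.Ici (0:ℝ)) (fun x : ℝ => χ / K' ^ n * x ^ n) := by
      have := (convexOn_pow n).smul (c := χ / K' ^ n) (by positivity)
      simpa [smul_eq_mul] using this
    exact h1.sub h2
  -- weights
  have h1C : (0:ℝ) < 1 - C := by linarith
  have ha0 : 0 < (1 - C') / (1 - C) := by apply div_pos <;> linarith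
  have hb0 : 0 < (C' - C) / (1 - C) := by apply div_pos <;> linarith
  have hab : (1 - C') / (1 - C) + (C' - C) / (1 - C) = 1 := by
    field_simp
    ring
  have hcomb : ((1 - C') / (1 - C)) • C + ((C' - C) / (1 - C)) • (1:ℝ) = C' := by
    rw [smul_eq_mul, smul_eq_mul]
    field_simp
    ring
  have hineq := hconc.2 (Set.mem_Ici.2 hC0.le) (Set.mem_Ici.2 (by norm_num : (0:ℝ) ≤ 1))
    ha0.le hb0.le hab
  rw [hcomb] at hineq
  simp only [smul_eq_mul, one_pow, mul_one] at hineq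
  -- evaluate
  have hCK' : χ / K' ^ n * C ^ n = χ * (C / K') ^ n := by
    rw [div_pow]; ring
  have hC'K' : χ / K' ^ n * C' ^ n = χ * (C' / K') ^ n := by
    rw [div_pow]; ring
  rw [hCK', hC'K'] at hineq
  -- h(C') = 1 - χ, h(C) > 1 - χ, h(1) > 1 - χ
  have hhC : 1 - χ < C - χ * (C / K') ^ n := by nlinarith
  have hh1 : 1 - χ < 1 - χ / K' ^ n := by
    have : χ / K' ^ n < χ := by
      rw [div_lt_iff₀ hK'npos]; nlinarith
    linarith
  nlinarith [mul_lt_mul_of_pos_left hhC ha0, mul_lt_mul_of_pos_left hh1 hb0]
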